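/- Let G be an n-vertex graph and let H be a rank-p perturbation of G. Then G can be obtained from H by complementing on at most p+1 sets of vertices. Equivalently: every symmetric n×n matrix M over GF(2) of rank at most p whose effect on off-diagonal entries matters can be written, up to diagonal entries, as a sum of at most p+1 matrices of the form x xᵀ with x ∈ GF(2)ⁿ. -/

import Mathlib

variable {V : Type*}

open Classical in
/-- Local complementation at `v`: complement the induced subgraph on `N_G(v)`. -/
noncomputable def localComp (G : SimpleGraph V) (v : V) : SimpleGraph V where
  Adj x y := x ≠ y ∧ (if G.Adj v x ∧ G.Adj v y then ¬ G.Adj x y else G.Adj x y)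
  symm := by
    constructor
    intro x y ⟨hxy, h⟩
    refine ⟨hxy.symm, ?_⟩
    by_cases hc : G.Adj v x ∧ G.Adj v y
    · rw [if_pos hc] at h
      rw [if_pos ⟨hc.2, hc.1⟩]
      exact fun h' => h h'.symm
    · rw [if_neg hc] at h
      rw [if_neg (fun h' => hc ⟨h'.2, h'.1⟩)]
      exact h.symm
  loopless := ⟨fun x hx => hx.1 rfl⟩

/-- Toggle (add or remove) the edge `uv`. -/
def toggle (G : SimpleGraph V) (u v : V) : SimpleGraph V where
  Adj x y := x ≠ y ∧ Xor' (G.Adj x y) ((x = u ∧ y = v) ∨ (x = v ∧ y = u))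
  symm := by
    constructor
    intro x y ⟨hxy, h⟩
    refine ⟨hxy.symm, ?_⟩
    rw [G.adj_comm y x]
    change (_ ∧ ¬_) ∨ (_ ∧ ¬_) at h
    change (_ ∧ ¬_) ∨ (_ ∧ ¬_)
    tauto
  loopless := ⟨fun x hx => hx.1 rfl⟩

/-- Local equivalence: related by a sequence of local complementations. -/
def LocallyEquiv (G H : SimpleGraph V) : Prop :=
  Relation.ReflTransGen (fun A B => ∃ v, B = localComp A v) G H

/-- `CZle G H k` : there is a sequence `G = G₀, G₀', G₁, G₁', …, G_k, G_k' = H`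
with each `Gᵢ'` locally equivalent to `Gᵢ` and each `Gᵢ` (i ≥ 1) obtained from
`G_{i-1}'` by adding or removing a single edge. -/
inductive CZle : SimpleGraph V → SimpleGraph V → ℕ → Prop
  | base {G H : SimpleGraph V} : LocallyEquiv G H → CZle G H 0
  | step {G G' F H : SimpleGraph V} {k : ℕ} (u v : V) :
      LocallyEquiv G G' → u ≠ v → F = toggle G' u v → CZle F H k → CZle G H (k + 1)

/-- The CZ-distance between two graphs on the same vertex set. -/
noncomputable def czDist (G H : SimpleGraph V) : ℕ := sInf {k | CZle G H k}

/-- The CZ-distance of a graph: CZ-distance to the edgeless graph. -/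
noncomputable def cz (G : SimpleGraph V) : ℕ := czDist G ⊥

open Classical in
/-- Complementing on a vertex set `X`: replace the induced subgraph on `X` by its complement. -/
noncomputable def complOn (G : SimpleGraph V) (X : Set V) : SimpleGraph V :=
  SimpleGraph.fromRel (fun x y => if x ∈ X ∧ y ∈ X then ¬ G.Adj x y else G.Adj x y)

open Classical in
/-- The adjacency matrix over GF(2). -/
noncomputable def adjMat (G : SimpleGraph V) : Matrix V V (ZMod 2) :=
  fun x y => if G.Adj x y then 1 else 0

/-- `H` is a rank-`p` perturbation of `G`. -/
def IsRankPerturbation [Fintype V] (p : ℕ) (G H : SimpleGraph V) : Prop :=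
  ∃ M : Matrix V V (ZMod 2), M.IsSymm ∧ M.rank ≤ p ∧
    ∀ x y : V, x ≠ y → adjMat H x y = adjMat G x y + M x y

/-- `G` is a circle graph: the overlap graph of a family of closed intervals in `ℝ`
with pairwise distinct endpoints. -/
def IsCircleGraph (G : SimpleGraph V) : Prop :=
  ∃ l r : V → ℝ, (∀ v, l v < r v) ∧
    Function.Injective (fun p : V × Bool => if p.2 then r p.1 else l p.1) ∧
    ∀ x y, G.Adj x y ↔
      ((l x < l y ∧ l y < r x ∧ r x < r y) ∨ (l y < l x ∧ l x < r y ∧ r y < r x))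

/-- Two vertex sets are homogeneous: complete or anticomplete to each other. -/
def Homog (G : SimpleGraph V) (X Y : Finset V) : Prop :=
  (∀ x ∈ X, ∀ y ∈ Y, G.Adj x y) ∨ (∀ x ∈ X, ∀ y ∈ Y, ¬ G.Adj x y)

/-- Every part of the partition `P` has red degree (number of other parts it is
inhomogeneous to) at most `k`. -/
def RedDegLE [Fintype V] [DecidableEq V] (G : SimpleGraph V) (P : Finpartition (Finset.univ : Finset V))
    (k : ℕ) : Prop :=
  ∀ X ∈ P.parts, {Y : Finset V | Y ∈ P.parts ∧ Y ≠ X ∧ ¬ Homog G X Y}.ncard ≤ k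

/-- One contraction: merge two parts of the partition. -/
def MergeStep [Fintype V] [DecidableEq V]
    (P Q : Finpartition (Finset.univ : Finset V)) : Prop :=
  ∃ A B, A ∈ P.parts ∧ B ∈ P.parts ∧ A ≠ B ∧
    Q.parts = insert (A ∪ B) ((P.parts.erase A).erase B)

/-- `G` has twin-width at most `k`: there is a contraction (partition) sequence from
the discrete partition to the trivial one in which every partition has red degree at
most `k`. -/
def TwinWidthLE [Fintype V] [DecidableEq V] (G : SimpleGraph V) (k : ℕ) : Prop :=
  ∃ (m : ℕ) (seq : Fin (m + 1) → Finpartition (Finset.univ : Finset V)),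
    (∀ X ∈ (seq 0).parts, X.card = 1) ∧
    (seq (Fin.last m)).parts.card ≤ 1 ∧
    (∀ i : Fin m, MergeStep (seq i.castSucc) (seq i.succ)) ∧
    (∀ i, RedDegLE G (seq i) k)

/-- `H` is obtained from `G` (in which `u` is isolated) by adding all edges between `u`
and `N_G(v)`, possibly adding the edge `uv`, and then adding at most `k` additional
edges incident to `u`. -/
def ExtendStep (k : ℕ) (G H : SimpleGraph V) (u v : V) : Prop :=
  u ≠ v ∧ G.neighborSet u = ∅ ∧
  (∀ x y, x ≠ u → y ≠ u → (H.Adj x y ↔ G.Adj x y)) ∧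
  G.neighborSet v ⊆ H.neighborSet u ∧
  ∃ T : Finset V, T.card ≤ k ∧ H.neighborSet u ⊆ G.neighborSet v ∪ {v} ∪ ↑T


section Stmt10Aux

open Matrix

variable [Fintype V]


variable {V : Type*} [Fintype V]

private lemma z2 (a : ZMod 2) : a + a = 0 := by revert a; decide

private lemma z2ne (a : ZMod 2) (h : a ≠ 0) : a = 1 := by revert a; decide

private lemma mat_add_self (A : Matrix V V (ZMod 2)) : A + A = 0 := by
  ext x y; simp [z2]

private lemma fun_add_self (v : V → ZMod 2) : v + v = 0 := by
  funext x; simp [z2]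

private lemma mulVec_vvT (v w z : V → ZMod 2) :
    (vecMulVec v w).mulVec z = (w ⬝ᵥ z) • v := by
  funext x
  simp only [Matrix.mulVec, dotProduct, vecMulVec_apply, Pi.smul_apply, smul_eq_mul]
  rw [Finset.sum_mul]
  exact Finset.sum_congr rfl fun y _ => by ring

private lemma col_dot_ker {M : Matrix V V (ZMod 2)} (hs : M.IsSymm) {z : V → ZMod 2}
    (hz : M.mulVec z = 0) (j : V) : (fun x => M x j) ⬝ᵥ z = 0 := by
  have h1 : (fun x => M x j) ⬝ᵥ z = M.mulVec z j := by
    simp only [Matrix.mulVec, dotProduct]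
    exact Finset.sum_congr rfl fun x _ => by rw [← hs.apply j x]
  rw [h1, hz]; rfl

private lemma rank_nullity (A : Matrix V V (ZMod 2)) :
    A.rank + Module.finrank (ZMod 2) (LinearMap.ker A.mulVecLin) = Fintype.card V := by
  have h := LinearMap.finrank_range_add_finrank_ker A.mulVecLin
  rwa [Module.finrank_fintype_fun_eq_card] at h

private lemma rank_add_one_le {A B : Matrix V V (ZMod 2)}
    (h : LinearMap.ker A.mulVecLin < LinearMap.ker B.mulVecLin) : B.rank + 1 ≤ A.rank := by
  have h1 := Submodule.finrank_lt_finrank_of_lt h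
  have h2 := rank_nullity A
  have h3 := rank_nullity B
  omega

private lemma rank_add_two_le {A B : Matrix V V (ZMod 2)} {T : Submodule (ZMod 2) (V → ZMod 2)}
    (h1 : LinearMap.ker A.mulVecLin < T) (h2 : T < LinearMap.ker B.mulVecLin) :
    B.rank + 2 ≤ A.rank := by
  have g1 := Submodule.finrank_lt_finrank_of_lt h1
  have g2 := Submodule.finrank_lt_finrank_of_lt h2
  have h3 := rank_nullity A
  have h4 := rank_nullity B
  omega

private lemma eq_zero_of_rank_eq_zero {M : Matrix V V (ZMod 2)} (h : M.rank = 0) : M = 0 := by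
  classical
  have hrange : LinearMap.range M.mulVecLin = ⊥ := Submodule.finrank_eq_zero.mp h
  ext x j
  have hm : M.mulVec (Pi.single j 1) = 0 := by
    have : M.mulVecLin (Pi.single j 1) ∈ LinearMap.range M.mulVecLin := ⟨_, rfl⟩
    rw [hrange] at this
    simpa [Matrix.mulVecLin_apply] using this
  have := congrFun hm x
  rw [Matrix.mulVec_single] at this
  simpa using this

/-- Peeling step: diagonal pivot. -/
private lemma peel_rank {M : Matrix V V (ZMod 2)} (hs : M.IsSymm) {i : V} (hi : M i i = 1) :
    (M + vecMulVec (fun x => M x i) (fun x => M x i)).rank + 1 ≤ M.rank := by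
  classical
  set v : V → ZMod 2 := fun x => M x i with hv
  set M₁ := M + vecMulVec v v with hM₁
  have hker : LinearMap.ker M.mulVecLin < LinearMap.ker M₁.mulVecLin := by
    rw [SetLike.lt_iff_le_and_exists]
    constructor
    · intro z hz
      rw [LinearMap.mem_ker, Matrix.mulVecLin_apply] at hz ⊢
      rw [hM₁, add_mulVec, mulVec_vvT, hz, col_dot_ker hs hz i]
      simp
    · refine ⟨Pi.single i 1, ?_, ?_⟩
      · rw [LinearMap.mem_ker, Matrix.mulVecLin_apply, hM₁, add_mulVec, mulVec_vvT,
          Matrix.mulVec_single, dotProduct_single]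
        have h1 : v i * 1 = (1 : ZMod 2) := by simp [hv, hi]
        rw [h1, one_smul]
        funext x
        simp [hv, z2, mul_one]
      · rw [LinearMap.mem_ker, Matrix.mulVecLin_apply, Matrix.mulVec_single]
        intro hzero
        have := congrFun hzero i
        simp [hi] at this
  exact rank_add_one_le hker

/-- Alternating step: off-diagonal pivot kills rank by two. -/
private lemma altstep_rank {M : Matrix V V (ZMod 2)} (hs : M.IsSymm) (hd : ∀ x, M x x = 0)
    {i a : V} (hia : M i a = 1) :
    (M + (vecMulVec (fun x => M x i) (fun x => M x a)
      + vecMulVec (fun x => M x a) (fun x => M x i))).rank + 2 ≤ M.rank := by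
  classical
  set u : V → ZMod 2 := fun x => M x i with hu
  set w : V → ZMod 2 := fun x => M x a with hw
  set M₂ := M + (vecMulVec u w + vecMulVec w u) with hM₂
  have hMai : M a i = 1 := by
    rw [← hs.apply a i]; exact hia
  have mulM₂ : ∀ z, M₂.mulVec z = M.mulVec z + ((w ⬝ᵥ z) • u + (u ⬝ᵥ z) • w) := by
    intro z
    rw [hM₂, add_mulVec, add_mulVec, mulVec_vvT, mulVec_vvT]
  have hea : M₂.mulVec (Pi.single a 1) = 0 := by
    rw [mulM₂, Matrix.mulVec_single, dotProduct_single, dotProduct_single]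
    have h1 : w a * 1 = (0 : ZMod 2) := by simp [hw, hd a]
    have h2 : u a * 1 = (1 : ZMod 2) := by simp [hu, hMai]
    rw [h1, h2, zero_smul, one_smul, zero_add]
    funext x
    simp [hw, z2, mul_one]
  have hei : M₂.mulVec (Pi.single i 1) = 0 := by
    rw [mulM₂, Matrix.mulVec_single, dotProduct_single, dotProduct_single]
    have h1 : w i * 1 = (1 : ZMod 2) := by simp [hw, hia]
    have h2 : u i * 1 = (0 : ZMod 2) := by simp [hu, hd i]
    rw [h1, h2, zero_smul, one_smul, add_zero]
    funext x
    simp [hu, z2, mul_one]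
  set T := LinearMap.ker M.mulVecLin ⊔ Submodule.span (ZMod 2) {Pi.single a (1 : ZMod 2)} with hT
  have kerle : LinearMap.ker M.mulVecLin ≤ LinearMap.ker M₂.mulVecLin := by
    intro z hz
    rw [LinearMap.mem_ker, Matrix.mulVecLin_apply] at hz ⊢
    rw [mulM₂, hz, col_dot_ker hs hz i, col_dot_ker hs hz a]
    simp
  have h1 : LinearMap.ker M.mulVecLin < T := by
    rw [SetLike.lt_iff_le_and_exists]
    refine ⟨le_sup_left, Pi.single a 1, ?_, ?_⟩
    · exact Submodule.mem_sup_right (Submodule.mem_span_singleton_self _)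
    · rw [LinearMap.mem_ker, Matrix.mulVecLin_apply, Matrix.mulVec_single]
      intro hzero
      have := congrFun hzero i
      simp [hia] at this
  have h2 : T < LinearMap.ker M₂.mulVecLin := by
    rw [SetLike.lt_iff_le_and_exists]
    constructor
    · rw [hT, sup_le_iff]
      refine ⟨kerle, ?_⟩
      rw [Submodule.span_singleton_le_iff_mem, LinearMap.mem_ker, Matrix.mulVecLin_apply]
      exact hea
    · refine ⟨Pi.single i 1, ?_, ?_⟩
      · rw [LinearMap.mem_ker, Matrix.mulVecLin_apply]; exact hei
      · intro hmem
        rw [hT, Submodule.mem_sup] at hmem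
        obtain ⟨z, hz, y, hy, hzy⟩ := hmem
        rw [Submodule.mem_span_singleton] at hy
        obtain ⟨c, rfl⟩ := hy
        rw [LinearMap.mem_ker, Matrix.mulVecLin_apply] at hz
        have happ : M.mulVec (z + c • (Pi.single a 1 : V → ZMod 2)) = M.mulVec (Pi.single i (1 : ZMod 2)) := by
          rw [hzy]
        rw [Matrix.mulVec_add, hz, Matrix.mulVec_smul, Matrix.mulVec_single,
          Matrix.mulVec_single, zero_add] at happ
        have := congrFun happ a
        simp only [Pi.smul_apply, smul_eq_mul] at this
        simp only [MulOpposite.op_one, one_smul, Matrix.col_apply] at this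
        rw [show M a a = 0 from hd a, mul_zero] at this
        rw [hMai] at this
        exact one_ne_zero this.symm
  exact rank_add_two_le h1 h2


private lemma sum_map_add (L : List (V → ZMod 2)) (w : V → ZMod 2) :
    (L.map (· + w)).sum = L.sum + L.length • w := by
  induction L with
  | nil => simp
  | cons x t iht =>
      simp only [List.map_cons, List.sum_cons, List.length_cons, iht, succ_nsmul]
      abel

private lemma nsmul_odd {A : Type*} [AddCommMonoid A] (h2 : ∀ a : A, a + a = 0)
    {m : ℕ} (hm : m % 2 = 1) (a : A) : m • a = a := by
  obtain ⟨k, rfl⟩ : ∃ k, m = 2 * k + 1 := ⟨m / 2, by omega⟩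
  rw [add_nsmul, one_nsmul, mul_comm, mul_nsmul, two_nsmul, h2]
  simp

private lemma vvT_expand (x w : V → ZMod 2) :
    vecMulVec (x + w) (x + w)
      = vecMulVec x x + vecMulVec x w + vecMulVec w x + vecMulVec w w := by
  ext p q
  simp only [Matrix.add_apply, vecMulVec_apply, Pi.add_apply]
  ring

private lemma vvT_add_left (x y w : V → ZMod 2) :
    vecMulVec (x + y) w = vecMulVec x w + vecMulVec y w := by
  ext p q
  simp only [Matrix.add_apply, vecMulVec_apply, Pi.add_apply]
  ring

private lemma vvT_add_right (x y w : V → ZMod 2) :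
    vecMulVec w (x + y) = vecMulVec w x + vecMulVec w y := by
  ext p q
  simp only [Matrix.add_apply, vecMulVec_apply, Pi.add_apply]
  ring

private lemma sum_map_vvT (L : List (V → ZMod 2)) (w : V → ZMod 2) :
    (L.map fun v => vecMulVec (v + w) (v + w)).sum
      = (L.map fun v => vecMulVec v v).sum + vecMulVec L.sum w + vecMulVec w L.sum
        + L.length • vecMulVec w w := by
  induction L with
  | nil =>
      have z0l : vecMulVec (0 : V → ZMod 2) w = 0 := by ext p q; simp [vecMulVec_apply]
      have z0r : vecMulVec w (0 : V → ZMod 2) = 0 := by ext p q; simp [vecMulVec_apply]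
      simp [z0l, z0r]
  | cons x t iht =>
      rw [List.map_cons, List.sum_cons, iht, List.map_cons, List.sum_cons,
        List.length_cons, List.sum_cons, succ_nsmul, vvT_expand, vvT_add_left, vvT_add_right]
      abel

/-- Decomposition of alternating symmetric matrices into `rank + 1` symmetric
rank-one matrices, exactly, with an odd number of vectors summing to zero. -/
private lemma alt_decomp : ∀ (n : ℕ) (M : Matrix V V (ZMod 2)), M.IsSymm →
    (∀ x, M x x = 0) → M.rank ≤ n →
    ∃ L : List (V → ZMod 2), L.length ≤ n + 1 ∧ L.length % 2 = 1 ∧ L.sum = 0 ∧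
      (L.map fun v => vecMulVec v v).sum = M := by
  intro n
  induction n using Nat.strong_induction_on with
  | _ n ih =>
    intro M hs hd hr
    by_cases hM : M = 0
    · refine ⟨[0], by simp, by simp, by simp, ?_⟩
      subst hM
      simp only [List.map_cons, List.map_nil, List.sum_cons, List.sum_nil, add_zero]
      ext p q
      simp [vecMulVec_apply]
    · obtain ⟨i, a, hia0⟩ : ∃ i a, M i a ≠ 0 := by
        by_contra hcon
        push_neg at hcon
        exact hM (Matrix.ext fun i j => by simpa using hcon i j)
      have hia : M i a = 1 := z2ne _ hia0
      have hrank2 := altstep_rank hs hd hia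
      set u : V → ZMod 2 := fun x => M x i with hu
      set w : V → ZMod 2 := fun x => M x a with hw
      set M₂ := M + (vecMulVec u w + vecMulVec w u) with hM₂
      have hM₂s : M₂.IsSymm := by
        rw [Matrix.IsSymm] at hs ⊢
        rw [hM₂, Matrix.transpose_add, Matrix.transpose_add, hs]
        congr 1
        ext p q
        simp only [Matrix.add_apply, Matrix.transpose_apply, vecMulVec_apply]
        ring
      have hM₂d : ∀ x, M₂ x x = 0 := by
        intro x
        rw [hM₂]
        simp only [Matrix.add_apply, vecMulVec_apply]
        rw [hd x]
        rw [mul_comm (w x) (u x)]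
        rw [z2]
        simp
      have hn2 : 2 ≤ n := by omega
      obtain ⟨L', hlen', hodd', hsum', hmat'⟩ :=
        ih (n - 2) (by omega) M₂ hM₂s hM₂d (by omega)
      refine ⟨u :: (u + w) :: L'.map (· + w), ?_, ?_, ?_, ?_⟩
      · simp only [List.length_cons, List.length_map]
        omega
      · simp only [List.length_cons, List.length_map]
        omega
      · simp only [List.sum_cons, sum_map_add, hsum', zero_add]
        rw [nsmul_odd fun_add_self hodd' w]
        rw [show u + (u + w + w) = (u + u) + (w + w) by abel, fun_add_self, fun_add_self,
          add_zero]
      · simp only [List.map_cons, List.sum_cons, List.map_map]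
        have hcomp : ((fun v => vecMulVec v v) ∘ (· + w)) = fun v => vecMulVec (v + w) (v + w) := rfl
        rw [hcomp, sum_map_vvT, hsum', hmat']
        rw [nsmul_odd mat_add_self (by simpa using hodd') (vecMulVec w w)]
        rw [vvT_expand]
        have z0l : vecMulVec (0 : V → ZMod 2) w = 0 := by
          ext p q; simp [vecMulVec_apply]
        have z0r : vecMulVec w (0 : V → ZMod 2) = 0 := by
          ext p q; simp [vecMulVec_apply]
        rw [z0l, z0r, hM₂]
        ext p q
        simp only [Matrix.add_apply, Matrix.zero_apply, vecMulVec_apply, Pi.add_apply]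
        generalize u p = a
        generalize u q = b
        generalize w p = c
        generalize w q = d
        generalize M p q = e
        revert a b c d e
        decide

private lemma list_entry (L : List (V → ZMod 2)) (x y : V) :
    ((L.map fun v => vecMulVec v v).sum) x y = (L.map fun v => v x * v y).sum := by
  induction L with
  | nil => simp
  | cons h t iht => simp [Matrix.add_apply, vecMulVec_apply, iht]

/-- Main decomposition: a symmetric matrix of rank at most `p` agrees off the
diagonal with a sum of at most `p + 1` symmetric rank-one matrices. -/
private lemma main_decomp : ∀ (p : ℕ) (M : Matrix V V (ZMod 2)), M.IsSymm → M.rank ≤ p →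
    ∃ L : List (V → ZMod 2), L.length ≤ p + 1 ∧
      ∀ x y : V, x ≠ y → M x y = (L.map fun v => v x * v y).sum := by
  intro p
  induction p with
  | zero =>
      intro M hs hr
      refine ⟨[], by simp, fun x y _ => ?_⟩
      have h0 : M = 0 := eq_zero_of_rank_eq_zero (by omega)
      simp [h0]
  | succ q ih =>
      intro M hs hr
      by_cases hd : ∀ x, M x x = 0
      · obtain ⟨L, hlen, _, _, hmat⟩ := alt_decomp (q + 1) M hs hd hr
        refine ⟨L, hlen, fun x y _ => ?_⟩
        rw [← hmat]
        exact list_entry L x y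
      · push_neg at hd
        obtain ⟨i, hi0⟩ := hd
        have hi : M i i = 1 := z2ne _ hi0
        have hpe := peel_rank hs hi
        set v : V → ZMod 2 := fun x => M x i with hv
        set M₁ := M + vecMulVec v v with hM₁
        have hM₁s : M₁.IsSymm := by
          rw [Matrix.IsSymm] at hs ⊢
          rw [hM₁, Matrix.transpose_add, hs]
          congr 1
          ext p q
          simp only [Matrix.transpose_apply, vecMulVec_apply]
          ring
        obtain ⟨L, hlen, hoff⟩ := ih M₁ hM₁s (by omega)
        refine ⟨v :: L, by simpa using hlen, fun x y hxy => ?_⟩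
        rw [List.map_cons, List.sum_cons, ← hoff x y hxy, hM₁]
        simp only [Matrix.add_apply, vecMulVec_apply]
        generalize M x y = e
        generalize v x = aa
        generalize v y = bb
        revert e aa bb
        decide


private lemma z2cases (a : ZMod 2) : a = 0 ∨ a = 1 := by revert a; decide

private lemma ite_one (a : ZMod 2) [Decidable (a = 1)] :
    (if a = 1 then (1 : ZMod 2) else 0) = a := by
  rcases z2cases a with h | h <;> subst h
  · rw [if_neg zero_ne_one]
  · rw [if_pos rfl]

open Classical in
private lemma adjMat_complOn (G : SimpleGraph V) (X : Set V) {x y : V} (h : x ≠ y) :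
    adjMat (complOn G X) x y
      = adjMat G x y + (if x ∈ X then 1 else 0) * (if y ∈ X then (1 : ZMod 2) else 0) := by
  by_cases hx : x ∈ X <;> by_cases hy : y ∈ X <;> by_cases hG : G.Adj x y <;>
    simp [adjMat, complOn, SimpleGraph.fromRel_adj, h, hx, hy, hG, G.adj_comm y x] <;>
    decide

open Classical in
private lemma adjMat_foldl : ∀ (l : List (Set V)) (H : SimpleGraph V) (x y : V), x ≠ y →
    adjMat (l.foldl complOn H) x y
      = adjMat H x y
        + (l.map fun X => (if x ∈ X then 1 else 0) * (if y ∈ X then (1 : ZMod 2) else 0)).sum := by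
  intro l
  induction l with
  | nil => intro H x y h; simp
  | cons X t iht =>
      intro H x y h
      rw [List.foldl_cons, List.map_cons, List.sum_cons, iht (complOn H X) x y h,
        adjMat_complOn H X h]
      ring

private lemma graph_eq_of_adjMat {G₁ G₂ : SimpleGraph V}
    (h : ∀ x y : V, x ≠ y → adjMat G₁ x y = adjMat G₂ x y) : G₁ = G₂ := by
  ext x y
  by_cases hxy : x = y
  · subst hxy
    simp
  · have hh := h x y hxy
    simp only [adjMat] at hh
    by_cases h1 : G₁.Adj x y <;> by_cases h2 : G₂.Adj x y
    · simp [h1, h2]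
    · rw [if_pos h1, if_neg h2] at hh
      exact absurd hh one_ne_zero
    · rw [if_neg h1, if_pos h2] at hh
      exact absurd hh.symm one_ne_zero
    · simp [h1, h2]

end Stmt10Aux

theorem stmt10 [Fintype V] (G H : SimpleGraph V) (p : ℕ)
    (h : IsRankPerturbation p G H) :
    ∃ l : List (Set V), l.length ≤ p + 1 ∧ G = l.foldl complOn H := by
  classical
  obtain ⟨M, hsym, hrank, hM⟩ := h
  obtain ⟨L, hlen, hoff⟩ := main_decomp p M hsym hrank
  refine ⟨L.map (fun v => {z | v z = 1}), by simpa using hlen, ?_⟩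
  apply graph_eq_of_adjMat
  intro x y hxy
  rw [adjMat_foldl _ H x y hxy, List.map_map]
  have hco : ((fun X => (if x ∈ X then 1 else 0) * (if y ∈ X then (1 : ZMod 2) else 0))
      ∘ fun v : V → ZMod 2 => {z | v z = 1}) = fun v : V → ZMod 2 => v x * v y := by
    funext v
    simp only [Function.comp_apply, Set.mem_setOf_eq]
    rw [ite_one, ite_one]
  rw [hco, ← hoff x y hxy, hM x y hxy, add_assoc, z2, add_zero]
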